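/- Explicit solution and uniform bound for the third equation of the Leading Order Model: let α>0 and let Λ:[0,T]×[0,∞)→ℝ be continuous. Then ξ(t,R,β) := 1 − exp(−(1/2α)∫₀ᵗ Λ(τ,R) dτ) satisfies, pointwise, ∂_tξ + (Λ(t,R)/2α) sin(2β) ∂_βξ = (Λ(t,R)/2α)(1−ξ), with ξ(0,R,β)=0. Moreover, if Λ≥0 then 0 ≤ ξ(t,R,β) < 1 for all (t,R,β), and if additionally ∫₀ᵗΛ(τ,R)dτ ≥ (2α/c₂)log(1+(c₂t/2α)c₀) for constants c₀,c₂>0 then ‖ξ(t)‖_{L∞} ≤ 1 + (1+c₂tc₀/(2α))^{−1/c₂} < 3. -/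

import Mathlib

open MeasureTheory Set Real

noncomputable section

/-- the explicit solution `ξ(t,R,β) = 1 − exp(−(1/2α) ∫₀ᵗ Λ(τ,R) dτ)` -/
def xiSol (α : ℝ) (Λ : ℝ → ℝ → ℝ) (t R _β : ℝ) : ℝ :=
  1 - Real.exp (-(1 / (2 * α)) * ∫ τ in (0:ℝ)..t, Λ τ R)

/-- **Explicit solution and uniform bound for the third equation of the Leading Order
Model.**  `ξ(t,R,β) = 1 − exp(−(1/2α)∫₀ᵗΛ(τ,R)dτ)` solves
`∂_tξ + (Λ/2α) sin(2β) ∂_βξ = (Λ/2α)(1−ξ)` with `ξ(0)=0`; if `Λ ≥ 0` then `0 ≤ ξ < 1`,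
and under the logarithmic lower bound on `∫₀ᵗΛ` one has
`‖ξ(t)‖_{L∞} ≤ 1 + (1+c₂tc₀/(2α))^{−1/c₂} < 3`. -/
theorem xi_explicit_solution_and_bound
    (α : ℝ) (hα : 0 < α) (Λ : ℝ → ℝ → ℝ)
    (hΛ : Continuous fun p : ℝ × ℝ => Λ p.1 p.2) :
    (∀ t R β : ℝ,
      deriv (fun t' => xiSol α Λ t' R β) t
          + Λ t R / (2 * α) * Real.sin (2 * β) * deriv (fun b => xiSol α Λ t R b) β
        = Λ t R / (2 * α) * (1 - xiSol α Λ t R β) ∧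
      xiSol α Λ 0 R β = 0) ∧
    ((∀ t R : ℝ, 0 ≤ Λ t R) →
      (∀ t R β : ℝ, 0 ≤ t → 0 ≤ xiSol α Λ t R β ∧ xiSol α Λ t R β < 1) ∧
      ∀ c₀ c₂ : ℝ, 0 < c₀ → 0 < c₂ →
        (∀ R t : ℝ, 0 ≤ t →
          (2 * α / c₂) * Real.log (1 + (c₂ * t / (2 * α)) * c₀) ≤ ∫ τ in (0:ℝ)..t, Λ τ R) →
        ∀ t : ℝ, 0 ≤ t →
          (⨆ p : ℝ × ℝ, |xiSol α Λ t p.1 p.2|)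
              ≤ 1 + (1 + c₂ * t * c₀ / (2 * α)) ^ (-(1 / c₂)) ∧
          1 + (1 + c₂ * t * c₀ / (2 * α)) ^ (-(1 / c₂)) < 3) := by
  have hΛR : ∀ R : ℝ, Continuous fun τ => Λ τ R := fun R =>
    hΛ.comp (continuous_id.prodMk continuous_const)
  constructor
  · intro t R β
    constructor
    · -- the PDE
      have hg : HasDerivAt (fun t' => ∫ τ in (0:ℝ)..t', Λ τ R) (Λ t R) t :=
        intervalIntegral.integral_hasDerivAt_right ((hΛR R).intervalIntegrable 0 t)
          ((hΛR R).stronglyMeasurableAtFilter _ _) (hΛR R).continuousAt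
      have hd : HasDerivAt (fun t' => xiSol α Λ t' R β)
          (-(Real.exp (-(1 / (2 * α)) * ∫ τ in (0:ℝ)..t, Λ τ R) * (-(1 / (2 * α)) * Λ t R))) t := by
        simpa [xiSol] using ((hg.const_mul (-(1 / (2 * α)))).exp).const_sub (1:ℝ)
      have hβ : deriv (fun b => xiSol α Λ t R b) β = 0 := by
        simp [xiSol]
      rw [hd.deriv, hβ]
      have h2α : (2 * α) ≠ 0 := by positivity
      simp only [xiSol]
      field_simp
      ring
    · simp [xiSol]
  · intro hΛpos
    have hxibound : ∀ t R β : ℝ, 0 ≤ t → 0 ≤ xiSol α Λ t R β ∧ xiSol α Λ t R β < 1 := by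
      intro t R β ht
      have hI : 0 ≤ ∫ τ in (0:ℝ)..t, Λ τ R :=
        intervalIntegral.integral_nonneg ht fun τ _ => hΛpos τ R
      have h1 : Real.exp (-(1 / (2 * α)) * ∫ τ in (0:ℝ)..t, Λ τ R) ≤ 1 := by
        rw [Real.exp_le_one_iff]
        have : 0 ≤ (1 / (2 * α)) * ∫ τ in (0:ℝ)..t, Λ τ R := by positivity
        nlinarith
      exact ⟨by simp only [xiSol]; linarith,
        by simp only [xiSol]; nlinarith [Real.exp_pos (-(1 / (2 * α)) * ∫ τ in (0:ℝ)..t, Λ τ R)]⟩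
    refine ⟨hxibound, fun c₀ c₂ hc₀ hc₂ _ t ht => ?_⟩
    have hbase : (1:ℝ) ≤ 1 + c₂ * t * c₀ / (2 * α) := by
      have : 0 ≤ c₂ * t * c₀ / (2 * α) := by positivity
      linarith
    have hterm0 : 0 ≤ (1 + c₂ * t * c₀ / (2 * α)) ^ (-(1 / c₂)) :=
      Real.rpow_nonneg (by linarith) _
    have hterm1 : (1 + c₂ * t * c₀ / (2 * α)) ^ (-(1 / c₂)) ≤ 1 :=
      Real.rpow_le_one_of_one_le_of_nonpos hbase (neg_nonpos.mpr (by positivity))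
    constructor
    · refine ciSup_le fun p => ?_
      have h := hxibound t p.1 p.2 ht
      rw [abs_le]
      exact ⟨by linarith [h.1], by linarith [h.2]⟩
    · linarith
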